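/- Let (X,d) be a geodesic metric space and let {U_j}_{j∈J} be a cover of X by open sets of multiplicity at most M, with associated 1-Lipschitz functions φ_j : X → [0,C] where φ_j vanishes outside U_j. Then the map φ = (φ_j)_{j∈J} : X → ℓ²(J) is √M-Lipschitz. -/

import Mathlib

open scoped BigOperators

/-- The space of persistence diagrams on one point: `T ∪ {Δ}`, where
`T = {(x₁,x₂) : x₂ > x₁ ≥ 0}` and `none` plays the role of the diagonal `Δ`. -/
abbrev D1 : Type := Option {p : ℝ × ℝ // 0 ≤ p.1 ∧ p.1 < p.2}

/-- The bottleneck distance on `D1`. -/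
noncomputable def dB : D1 → D1 → ℝ
  | none, none => 0
  | none, some p => (p.1.2 - p.1.1) / 2
  | some p, none => (p.1.2 - p.1.1) / 2
  | some p, some q =>
      min (max |p.1.1 - q.1.1| |p.1.2 - q.1.2|)
        (max ((p.1.2 - p.1.1) / 2) ((q.1.2 - q.1.1) / 2))

/-- max over coordinates. -/
noncomputable def dBmax {N : ℕ} (x y : Fin N → D1) : ℝ :=
  Finset.univ.fold max 0 (fun i => dB (x i) (y i))

/-- bottleneck distance on tuples, min over permutations. -/
noncomputable def dBn {N : ℕ} (x y : Fin N → D1) : ℝ :=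
  Finset.univ.inf' Finset.univ_nonempty
    (fun ψ : Equiv.Perm (Fin N) => dBmax x (y ∘ ψ))

def RGplus (R : ℝ) : Set D1 :=
  insert none {d : D1 | ∃ p, d = some p ∧ ∃ m k : ℕ,
    Odd m ∧ 1 ≤ m ∧ Even k ∧ 4 ≤ k ∧ m + 3 ≤ k ∧ p.1 = ((m : ℝ) * R, (k : ℝ) * R)}

def inBox (L : ℝ) : D1 → Prop
  | none => True
  | some p => p.1.1 ∈ Set.Icc 0 L ∧ p.1.2 ∈ Set.Icc 0 L

/-- In a geodesic metric space, a family of 1-Lipschitz functions `φ_j : X → [0,C]`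
supported in the sets of an open cover of multiplicity at most `M` assembles into a
`√M`-Lipschitz map into `ℓ²(J)`. -/
theorem cover_assembly_sqrt_lipschitz {X : Type*} [MetricSpace X] {J : Type*}
    (U : J → Set X) (φ : J → X → ℝ) (M : ℕ) (C : ℝ)
    (hgeo : ∀ x y : X, ∃ γ : ℝ → X, γ 0 = x ∧ γ (dist x y) = y ∧
      ∀ s ∈ Set.Icc (0 : ℝ) (dist x y), ∀ t ∈ Set.Icc (0 : ℝ) (dist x y),
        dist (γ s) (γ t) = |s - t|)
    (hopen : ∀ j, IsOpen (U j))
    (hcover : ∀ x, ∃ j, x ∈ U j)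
    (hmult : ∀ x, {j | x ∈ U j}.Finite ∧ {j | x ∈ U j}.ncard ≤ M)
    (hlip : ∀ j, LipschitzWith 1 (φ j))
    (hrange : ∀ j x, φ j x ∈ Set.Icc 0 C)
    (hsupp : ∀ j x, x ∉ U j → φ j x = 0) :
    ∀ x y : X, Real.sqrt (∑' j, (φ j x - φ j y) ^ 2) ≤ Real.sqrt M * dist x y := by
  classical
  intro x y
  set d := dist x y with hdd
  have hd0 : (0:ℝ) ≤ d := dist_nonneg
  have key : ∀ F : Finset J, ∑ j ∈ F, (φ j x - φ j y) ^ 2 ≤ (M:ℝ) * d ^ 2 := by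
    intro F
    obtain ⟨γ, hγ0, hγd, hiso⟩ := hgeo x y
    set Φ : X → EuclideanSpace ℝ F := fun z => WithLp.toLp 2 (fun j => φ j z) with hΦ
    have hΦdist : ∀ z w : X, dist (Φ z) (Φ w)
        = Real.sqrt (∑ j ∈ F, (φ j z - φ j w) ^ 2) := by
      intro z w
      rw [EuclideanSpace.dist_eq]
      congr 1
      rw [← Finset.sum_coe_sort F (fun j => (φ j z - φ j w) ^ 2)]
      refine Finset.sum_congr rfl fun j _ => ?_
      rw [Real.dist_eq, sq_abs]
    have hγlip : LipschitzOnWith 1 γ (Set.Icc 0 d) := by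
      apply LipschitzOnWith.of_dist_le_mul
      intro s hs t ht
      rw [hiso s hs t ht, Real.dist_eq, NNReal.coe_one, one_mul]
    have hγcont : ContinuousOn γ (Set.Icc 0 d) := hγlip.continuousOn
    -- local estimate
    have local_est : ∀ t ∈ Set.Icc (0:ℝ) d, ∃ ε > (0:ℝ), ∀ t' ∈ Set.Icc (0:ℝ) d,
        t ≤ t' → t' ≤ t + ε → dist (Φ (γ t')) (Φ (γ t)) ≤ Real.sqrt M * (t' - t) := by
      intro t ht
      obtain ⟨hAfin, _⟩ := hmult (γ t)
      have hopenA : IsOpen (⋂ j ∈ {j | γ t ∈ U j}, U j) :=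
        hAfin.isOpen_biInter fun j _ => hopen j
      have hmemA : γ t ∈ ⋂ j ∈ {j | γ t ∈ U j}, U j := Set.mem_iInter₂.2 fun j hj => hj
      obtain ⟨ε, hε, hball⟩ := Metric.isOpen_iff.1 hopenA _ hmemA
      refine ⟨ε / 2, by positivity, ?_⟩
      intro t' ht' h1 h2
      have hdist : dist (γ t') (γ t) = t' - t := by
        rw [hiso t' ht' t ht, abs_of_nonneg (by linarith)]
      have hsub : ∀ j, γ t ∈ U j → γ t' ∈ U j := by
        intro j hj
        have hmem : γ t' ∈ ⋂ j ∈ {j | γ t ∈ U j}, U j := by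
          apply hball
          rw [Metric.mem_ball, hdist]; linarith
        exact Set.mem_iInter₂.1 hmem j hj
      have hterm : ∀ j ∈ F, (φ j (γ t') - φ j (γ t)) ^ 2
          ≤ if γ t' ∈ U j then (t' - t) ^ 2 else 0 := by
        intro j _
        by_cases hj : γ t' ∈ U j
        · simp only [hj, if_true]
          have hl := (hlip j).dist_le_mul (γ t') (γ t)
          rw [Real.dist_eq, hdist, NNReal.coe_one, one_mul] at hl
          calc (φ j (γ t') - φ j (γ t)) ^ 2 = |φ j (γ t') - φ j (γ t)| ^ 2 := (sq_abs _).symm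
            _ ≤ (t' - t) ^ 2 := by
                apply pow_le_pow_left₀ (abs_nonneg _) hl
        · simp only [hj, if_false]
          have e1 : φ j (γ t') = 0 := hsupp j _ hj
          have e2 : φ j (γ t) = 0 := hsupp j _ fun hc => hj (hsub j hc)
          simp [e1, e2]
      have hcard : ((F.filter (fun j => γ t' ∈ U j)).card : ℝ) ≤ (M:ℝ) := by
        have hss : ↑(F.filter (fun j => γ t' ∈ U j)) ⊆ {j | γ t' ∈ U j} := by
          intro j hj
          exact (Finset.mem_filter.1 hj).2
        have hn := Set.ncard_le_ncard hss (hmult (γ t')).1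
        rw [Set.ncard_coe_finset] at hn
        exact_mod_cast le_trans hn (hmult (γ t')).2
      have hsum : ∑ j ∈ F, (φ j (γ t') - φ j (γ t)) ^ 2 ≤ (M:ℝ) * (t' - t) ^ 2 := by
        calc ∑ j ∈ F, (φ j (γ t') - φ j (γ t)) ^ 2
            ≤ ∑ j ∈ F, (if γ t' ∈ U j then (t' - t) ^ 2 else 0) :=
              Finset.sum_le_sum hterm
          _ = ∑ j ∈ F.filter (fun j => γ t' ∈ U j), (t' - t) ^ 2 :=
              (Finset.sum_filter _ _).symm
          _ = ((F.filter (fun j => γ t' ∈ U j)).card : ℝ) * (t' - t) ^ 2 := by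
              rw [Finset.sum_const, nsmul_eq_mul]
          _ ≤ (M:ℝ) * (t' - t) ^ 2 := by
              apply mul_le_mul_of_nonneg_right hcard (by positivity)
      rw [hΦdist]
      refine le_trans (Real.sqrt_le_sqrt hsum) ?_
      rw [Real.sqrt_mul (Nat.cast_nonneg M), Real.sqrt_sq (by linarith : (0:ℝ) ≤ t' - t)]
    -- continuous induction
    set s : Set ℝ := {t | dist (Φ (γ t)) (Φ x) ≤ Real.sqrt M * t} with hsdef
    have hGcont : ContinuousOn (fun t => dist (Φ (γ t)) (Φ x)) (Set.Icc 0 d) := by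
      have heq : (fun t => dist (Φ (γ t)) (Φ x))
          = fun t => Real.sqrt (∑ j ∈ F, (φ j (γ t) - φ j x) ^ 2) :=
        funext fun t => hΦdist _ _
      rw [heq]
      apply Real.continuous_sqrt.comp_continuousOn
      apply continuousOn_finset_sum
      intro j _
      exact (((hlip j).continuous.comp_continuousOn hγcont).sub continuousOn_const).pow 2
    have hclosed : IsClosed (s ∩ Set.Icc 0 d) := by
      have heq : s ∩ Set.Icc 0 d = Set.Icc 0 d ∩
          (fun t => dist (Φ (γ t)) (Φ x) - Real.sqrt M * t) ⁻¹' Set.Iic 0 := by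
        ext t
        simp only [hsdef, Set.mem_inter_iff, Set.mem_setOf_eq, Set.mem_preimage,
          Set.mem_Iic, sub_nonpos, and_comm]
      rw [heq]
      exact (hGcont.sub ((continuous_const.mul continuous_id).continuousOn)).preimage_isClosed_of_isClosed
        isClosed_Icc isClosed_Iic
    have ha : (0:ℝ) ∈ s := by
      simp only [hsdef, Set.mem_setOf_eq, hγ0, dist_self, mul_zero, le_refl]
    have hgt : ∀ t ∈ s ∩ Set.Ico 0 d, ∀ z ∈ Set.Ioi t, (s ∩ Set.Ioc t z).Nonempty := by
      rintro t ⟨hts, ht0, htd⟩ z hz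
      obtain ⟨ε, hε, hloc⟩ := local_est t ⟨ht0, le_of_lt htd⟩
      set t' := min d (min z (t + ε)) with ht'def
      have htt' : t < t' := lt_min htd (lt_min hz (by linarith))
      have ht'd : t' ≤ d := min_le_left _ _
      have ht'0 : (0:ℝ) ≤ t' := le_trans ht0 htt'.le
      have ht'ε : t' ≤ t + ε := le_trans (min_le_right _ _) (min_le_right _ _)
      have ht'z : t' ≤ z := le_trans (min_le_right _ _) (min_le_left _ _)
      refine ⟨t', ?_, htt', ht'z⟩
      have hstep := hloc t' ⟨ht'0, ht'd⟩ htt'.le ht'ε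
      simp only [hsdef, Set.mem_setOf_eq]
      calc dist (Φ (γ t')) (Φ x) ≤ dist (Φ (γ t')) (Φ (γ t)) + dist (Φ (γ t)) (Φ x) :=
            dist_triangle _ _ _
        _ ≤ Real.sqrt M * (t' - t) + Real.sqrt M * t := add_le_add hstep hts
        _ = Real.sqrt M * t' := by ring
    have hmain := IsClosed.Icc_subset_of_forall_exists_gt hclosed ha hgt
    have hfin : dist (Φ (γ d)) (Φ x) ≤ Real.sqrt M * d := hmain ⟨hd0, le_refl d⟩
    rw [hγd] at hfin
    have hsq : ∑ j ∈ F, (φ j x - φ j y) ^ 2 = dist (Φ y) (Φ x) ^ 2 := by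
      rw [hΦdist, Real.sq_sqrt (Finset.sum_nonneg fun j _ => sq_nonneg _)]
      exact Finset.sum_congr rfl fun j _ => by ring
    calc ∑ j ∈ F, (φ j x - φ j y) ^ 2 = dist (Φ y) (Φ x) ^ 2 := hsq
      _ ≤ (Real.sqrt M * d) ^ 2 := pow_le_pow_left₀ dist_nonneg hfin 2
      _ = (M:ℝ) * d ^ 2 := by rw [mul_pow, Real.sq_sqrt (Nat.cast_nonneg M)]
  by_cases hsumm : Summable (fun j => (φ j x - φ j y) ^ 2)
  · have htsum : ∑' j, (φ j x - φ j y) ^ 2 ≤ (M:ℝ) * d ^ 2 := Summable.tsum_le_of_sum_le hsumm key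
    calc Real.sqrt (∑' j, (φ j x - φ j y) ^ 2) ≤ Real.sqrt ((M:ℝ) * d ^ 2) :=
          Real.sqrt_le_sqrt htsum
      _ = Real.sqrt M * d := by rw [Real.sqrt_mul (Nat.cast_nonneg M), Real.sqrt_sq hd0]
  · rw [tsum_eq_zero_of_not_summable hsumm, Real.sqrt_zero]
    positivity
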